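/- arXiv:2006.03815 — 2 statements merged into one kernel-verified Lean document; each statement's English description precedes it below -/
import Mathlib

section
/- Let H_0 ∈ (1/2,1), m ≥ 1 an integer with (2H_0-2)m > -1, t > 0, and fix real numbers w₁,…,wₙ with nonnegative integers β_1,…,β_n summing appropriately so that Σ_k β_k = m. Then ∫_{[0,t]²} Π_{k=1}^n |s - s' - w_k/T|^{(2H_0-2)β_k} ds ds' → ∫_{[0,t]²} |s - s'|^{(2H_0-2)m} ds ds' as T → ∞. -/
open MeasureTheory

/-- interval integrability of `|x| ^ q` for `q > -1`. -/
lemma aux_abs_rpow_intervalIntegrable {q : ℝ} (hq : -1 < q) (a b : ℝ) :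
    IntervalIntegrable (fun x : ℝ => |x| ^ q) volume a b := by
  have base : ∀ c : ℝ, 0 ≤ c → IntervalIntegrable (fun x : ℝ => |x| ^ q) volume 0 c := by
    intro c hc
    rw [intervalIntegrable_iff_integrableOn_Ioc_of_le hc]
    have h := intervalIntegral.intervalIntegrable_rpow' (a := 0) (b := c) hq
    rw [intervalIntegrable_iff_integrableOn_Ioc_of_le hc] at h
    exact h.congr_fun (fun x hx => by rw [abs_of_pos hx.1]) measurableSet_Ioc
  have all : ∀ c : ℝ, IntervalIntegrable (fun x : ℝ => |x| ^ q) volume 0 c := by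
    intro c
    rcases le_or_gt 0 c with h | h
    · exact base c h
    · have h3 := (IntervalIntegrable.iff_comp_neg (f := fun x : ℝ => |x| ^ q) (a := 0) (b := -c) (by simp)).mp (base (-c) (by linarith))
      simpa using h3
  exact ((all a).symm.trans (all b))

theorem stmt_8 (n : ℕ) (hn : 1 ≤ n) (H0 t : ℝ) (h1 : 1/2 < H0) (h2 : H0 < 1) (ht : 0 < t)
    (m : ℕ) (hm : 1 ≤ m) (β : Fin n → ℕ) (hβ : ∑ k, β k = m)
    (hint : (2*H0 - 2) * (m:ℝ) > -1) (w : Fin n → ℝ) :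
    Filter.Tendsto
      (fun T : ℝ => ∫ s in Set.Icc (0:ℝ) t, ∫ s' in Set.Icc (0:ℝ) t,
          ∏ k, |s - s' - w k / T| ^ ((2*H0 - 2) * (β k : ℝ)))
      Filter.atTop
      (nhds (∫ s in Set.Icc (0:ℝ) t, ∫ s' in Set.Icc (0:ℝ) t,
          |s - s'| ^ ((2*H0 - 2) * (m:ℝ)))) := by
  set A : ℝ := 2*H0 - 2 with hA
  set p : ℝ := A * (m:ℝ) with hp
  have hp1 : -1 < p := hint
  have hmpos : (0:ℝ) < (m:ℝ) := by exact_mod_cast hm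
  have hm0 : (m:ℝ) ≠ 0 := ne_of_gt hmpos
  have hβsum : ∑ k, ((β k : ℝ)) = (m:ℝ) := by exact_mod_cast hβ
  set μ : Measure ℝ := volume.restrict (Set.Icc (0:ℝ) t) with hμ
  set ν : Measure (ℝ×ℝ) := μ.prod μ with hν
  -- the primitive of |x|^p
  set P : ℝ → ℝ := fun x => ∫ u in (0:ℝ)..x, |u| ^ p with hP
  have Pcont : Continuous P :=
    intervalIntegral.continuous_primitive (fun a b => aux_abs_rpow_intervalIntegrable hp1 a b) 0
  have Pdiff : ∀ c d : ℝ, (∫ u in c..d, |u| ^ p) = P d - P c := by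
    intro c d
    have h := intervalIntegral.integral_add_adjacent_intervals
      (aux_abs_rpow_intervalIntegrable hp1 0 c) (aux_abs_rpow_intervalIntegrable hp1 c d)
    rw [hP]; dsimp only; linarith
  -- φ a = ∫_0^t |a - s'|^p ds'
  set φ : ℝ → ℝ := fun a => P (t - a) - P (0 - a) with hφ
  have φcont : Continuous φ := ((Pcont.comp (continuous_const.sub continuous_id)).sub
    (Pcont.comp (continuous_const.sub continuous_id)))
  have φval : ∀ a : ℝ, (∫ s' in (0:ℝ)..t, |a - s'| ^ p) = φ a := by
    intro a
    have h1 : (fun s' : ℝ => |a - s'| ^ p) = fun s' : ℝ => |s' - a| ^ p := by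
      funext s'; rw [abs_sub_comm]
    rw [h1]
    have h2 := intervalIntegral.integral_comp_sub_right (a := 0) (b := t)
      (fun u : ℝ => |u| ^ p) a
    rw [h2, Pdiff]
  -- inner integral identity
  have innerEq : ∀ (c s : ℝ), (∫ s' in Set.Icc (0:ℝ) t, |s - s' - c| ^ p) = φ (s - c) := by
    intro c s
    have h1 : (fun s' : ℝ => |s - s' - c| ^ p) = fun s' : ℝ => |(s - c) - s'| ^ p := by
      funext s'; ring_nf
    rw [h1, MeasureTheory.integral_Icc_eq_integral_Ioc,
      ← intervalIntegral.integral_of_le ht.le, φval]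
  -- sections are integrable
  have secInt : ∀ (c s : ℝ), IntegrableOn (fun s' : ℝ => |s - s' - c| ^ p) (Set.Icc (0:ℝ) t) := by
    intro c s
    have h0 := (aux_abs_rpow_intervalIntegrable hp1 (s - c) ((s - c) - t)).comp_sub_left (s - c)
    have h1 : IntervalIntegrable (fun s' : ℝ => |s - s' - c| ^ p) volume 0 t := by
      have he : (fun x : ℝ => |(s - c) - x| ^ p) = fun s' : ℝ => |s - s' - c| ^ p := by
        funext x; ring_nf
      simpa [he] using h0
    rw [integrableOn_Icc_iff_integrableOn_Ioc]
    exact (intervalIntegrable_iff_integrableOn_Ioc_of_le ht.le).mp h1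
  have φnonneg : ∀ a : ℝ, 0 ≤ φ a := by
    intro a
    have h := innerEq 0 a
    simp only [sub_zero] at h
    rw [← h]
    exact integral_nonneg fun s' => Real.rpow_nonneg (abs_nonneg _) _
  -- integrability of the comparison kernel on the product
  have gMeas : ∀ c : ℝ, Measurable (fun z : ℝ×ℝ => |z.1 - z.2 - c| ^ p) :=
    fun c => (((measurable_fst.sub measurable_snd).sub measurable_const).abs).pow measurable_const
  have gInt : ∀ c : ℝ, Integrable (fun z : ℝ×ℝ => |z.1 - z.2 - c| ^ p) ν := by
    intro c
    refine (integrable_prod_iff ((gMeas c).aestronglyMeasurable)).mpr ⟨?_, ?_⟩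
    · exact Filter.Eventually.of_forall fun s => secInt c s
    · have he : (fun s : ℝ => ∫ s', ‖|s - s' - c| ^ p‖ ∂μ) = fun s : ℝ => φ (s - c) := by
        funext s
        have : (fun s' : ℝ => ‖|s - s' - c| ^ p‖) = fun s' : ℝ => |s - s' - c| ^ p := by
          funext s'
          rw [Real.norm_eq_abs, abs_of_nonneg (Real.rpow_nonneg (abs_nonneg _) _)]
        rw [this, innerEq c s]
      rw [he]
      exact (φcont.comp (continuous_id.sub continuous_const)).integrableOn_Icc
  -- second primitive
  set K : ℝ → ℝ := fun x => ∫ u in (0:ℝ)..x, φ u with hK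
  have Kcont : Continuous K :=
    intervalIntegral.continuous_primitive (fun a b => φcont.intervalIntegrable a b) 0
  have Kdiff : ∀ c d : ℝ, (∫ u in c..d, φ u) = K d - K c := by
    intro c d
    have h := intervalIntegral.integral_add_adjacent_intervals
      (φcont.intervalIntegrable (μ := volume) 0 c) (φcont.intervalIntegrable (μ := volume) c d)
    rw [hK]; dsimp only; linarith
  -- value of the comparison integral
  have Bval : ∀ c : ℝ, (∫ z, |z.1 - z.2 - c| ^ p ∂ν) = K (t - c) - K (0 - c) := by
    intro c
    have h0 : (∫ z, |z.1 - z.2 - c| ^ p ∂ν)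
        = ∫ s, ∫ s', |s - s' - c| ^ p ∂μ ∂μ := by
      exact (MeasureTheory.integral_integral (f := fun s s' => |s - s' - c| ^ p)
        (gInt c)).symm
    rw [h0]
    have h1 : (∫ s, ∫ s', |s - s' - c| ^ p ∂μ ∂μ) = ∫ s, φ (s - c) ∂μ :=
      integral_congr_ae (Filter.Eventually.of_forall fun s => innerEq c s)
    rw [h1, hμ, MeasureTheory.integral_Icc_eq_integral_Ioc,
      ← intervalIntegral.integral_of_le ht.le,
      intervalIntegral.integral_comp_sub_right (fun u => φ u) c, Kdiff]
  -- the main family of functions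
  set F : (Fin n → ℝ) → ℝ×ℝ → ℝ :=
    fun c z => ∏ k, |z.1 - z.2 - c k| ^ (A * (β k : ℝ)) with hF
  have Fmeas : ∀ c, Measurable (F c) := by
    intro c
    apply Finset.measurable_prod
    intro k _
    exact (((measurable_fst.sub measurable_snd).sub measurable_const).abs).pow measurable_const
  have Fnonneg : ∀ c z, 0 ≤ F c z :=
    fun c z => Finset.prod_nonneg fun k _ => Real.rpow_nonneg (abs_nonneg _) _
  -- AM-GM bound
  have AMGM : ∀ (c : Fin n → ℝ) (z : ℝ×ℝ),
      F c z ≤ ∑ k, ((β k : ℝ)/m) * |z.1 - z.2 - c k| ^ p := by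
    intro c z
    have h := Real.geom_mean_le_arith_mean_weighted Finset.univ
      (fun k => (β k : ℝ)/m) (fun k => |z.1 - z.2 - c k| ^ p)
      (fun k _ => div_nonneg (Nat.cast_nonneg _) hmpos.le)
      (by rw [← Finset.sum_div, hβsum, div_self hm0])
      (fun k _ => Real.rpow_nonneg (abs_nonneg _) _)
    calc F c z = ∏ k, (|z.1 - z.2 - c k| ^ p) ^ ((β k : ℝ)/m) := by
          apply Finset.prod_congr rfl
          intro k _
          rw [← Real.rpow_mul (abs_nonneg _)]
          congr 1
          field_simp
          ring
      _ ≤ ∑ k, ((β k : ℝ)/m) * |z.1 - z.2 - c k| ^ p := h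
  -- integrability of F c
  have sumInt : ∀ c : Fin n → ℝ,
      Integrable (fun z : ℝ×ℝ => ∑ k, ((β k : ℝ)/m) * |z.1 - z.2 - c k| ^ p) ν := by
    intro c
    exact integrable_finset_sum _ (fun k _ => (gInt (c k)).const_mul _)
  have FInt : ∀ c, Integrable (F c) ν := by
    intro c
    refine Integrable.mono' (sumInt c) ((Fmeas c).aestronglyMeasurable)
      (Filter.Eventually.of_forall fun z => ?_)
    rw [Real.norm_eq_abs, abs_of_nonneg (Fnonneg c z)]
    exact AMGM c z
  -- integral bound
  have intBound : ∀ c : Fin n → ℝ,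
      (∫ z, F c z ∂ν) ≤ ∑ k, ((β k : ℝ)/m) * (K (t - c k) - K (0 - c k)) := by
    intro c
    have h := integral_mono_of_nonneg (Filter.Eventually.of_forall fun z => Fnonneg c z)
      (sumInt c) (Filter.Eventually.of_forall fun z => AMGM c z)
    calc (∫ z, F c z ∂ν) ≤ ∫ z, ∑ k, ((β k : ℝ)/m) * |z.1 - z.2 - c k| ^ p ∂ν := h
      _ = ∑ k, ((β k : ℝ)/m) * (K (t - c k) - K (0 - c k)) := by
          rw [integral_finset_sum _ (fun k _ => (gInt (c k)).const_mul _)]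
          apply Finset.sum_congr rfl
          intro k _
          rw [integral_const_mul, Bval]
  -- lintegral versions
  set L : (Fin n → ℝ) → ENNReal := fun c => ∫⁻ z, ENNReal.ofReal (F c z) ∂ν with hL
  have IEq : ∀ c, (∫ z, F c z ∂ν) = (L c).toReal := by
    intro c
    rw [hL]
    exact integral_eq_lintegral_of_nonneg_ae (Filter.Eventually.of_forall fun z => Fnonneg c z)
      ((Fmeas c).aestronglyMeasurable)
  have LEq : ∀ c, L c = ENNReal.ofReal (∫ z, F c z ∂ν) := by
    intro c
    exact (ofReal_integral_eq_lintegral_ofReal (FInt c)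
      (Filter.Eventually.of_forall fun z => Fnonneg c z)).symm
  -- target quantities
  set G0 : ℝ×ℝ → ℝ := fun z => |z.1 - z.2| ^ p with hG0
  have G0Int : Integrable G0 ν := by
    have h := gInt 0
    simpa [hG0] using h
  have G0meas : Measurable G0 := ((measurable_fst.sub measurable_snd).abs).pow measurable_const
  have G0nonneg : ∀ z, 0 ≤ G0 z := fun z => Real.rpow_nonneg (abs_nonneg _) _
  set I0 : ℝ := ∫ z, G0 z ∂ν with hI0
  have I0val : I0 = K t - K 0 := by
    have h := Bval 0
    simp only [sub_zero] at h
    rw [hI0, ← h]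
  set L0 : ENNReal := ∫⁻ z, ENNReal.ofReal (G0 z) ∂ν with hL0def
  have L0Eq : L0 = ENNReal.ofReal I0 :=
    (ofReal_integral_eq_lintegral_ofReal G0Int
      (Filter.Eventually.of_forall fun z => G0nonneg z)).symm
  have L0ne : L0 ≠ ⊤ := by rw [L0Eq]; exact ENNReal.ofReal_ne_top
  have I0nonneg : (0:ℝ) ≤ I0 := by
    rw [hI0]; exact integral_nonneg fun z => G0nonneg z
  have I0Eq : I0 = L0.toReal := by rw [L0Eq, ENNReal.toReal_ofReal I0nonneg]
  -- rewrite the statement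
  have iterEq : ∀ c : Fin n → ℝ,
      (∫ s in Set.Icc (0:ℝ) t, ∫ s' in Set.Icc (0:ℝ) t,
        ∏ k, |s - s' - c k| ^ (A * (β k : ℝ))) = (L c).toReal := by
    intro c
    rw [← IEq c]
    exact MeasureTheory.integral_integral
      (f := fun s s' => ∏ k, |s - s' - c k| ^ (A * (β k : ℝ))) (FInt c)
  have targetEq : (∫ s in Set.Icc (0:ℝ) t, ∫ s' in Set.Icc (0:ℝ) t, |s - s'| ^ p)
      = L0.toReal := by
    rw [← I0Eq, hI0]
    exact MeasureTheory.integral_integral (f := fun s s' => |s - s'| ^ p) G0Int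
  have keyFun : ∀ T : ℝ,
      (∫ s in Set.Icc (0:ℝ) t, ∫ s' in Set.Icc (0:ℝ) t,
        ∏ k, |s - s' - w k / T| ^ (A * (β k : ℝ))) = (L (fun k => w k / T)).toReal :=
    fun T => iterEq (fun k => w k / T)
  refine (Filter.tendsto_congr keyFun).mpr ?_
  rw [targetEq]
  -- reduce to sequences
  apply Filter.tendsto_of_seq_tendsto
  intro u hu
  have main : Filter.Tendsto (fun j => L (fun k => w k / u j)) Filter.atTop (nhds L0) := by
    -- a.e. convergence
    have hD0 : ν {z : ℝ×ℝ | z.1 - z.2 = 0} = 0 := by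
      have hDm : MeasurableSet {z : ℝ×ℝ | z.1 - z.2 = 0} :=
        (measurable_fst.sub measurable_snd) (measurableSet_singleton 0)
      rw [hν, Measure.prod_apply hDm]
      have hsec : ∀ s : ℝ, (Prod.mk s ⁻¹' {z : ℝ×ℝ | z.1 - z.2 = 0}) = {s} := by
        intro s; ext s'; simp [sub_eq_zero, eq_comm]
      have hzero : ∀ s : ℝ, μ (Prod.mk s ⁻¹' {z : ℝ×ℝ | z.1 - z.2 = 0}) = 0 := by
        intro s
        rw [hsec s, hμ, Measure.restrict_apply (measurableSet_singleton s)]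
        exact measure_mono_null Set.inter_subset_left (measure_singleton s)
      simp only [hzero, lintegral_zero]
    have hae : ∀ᵐ z ∂ν, z.1 - z.2 ≠ 0 := by
      rw [MeasureTheory.ae_iff]
      convert hD0 using 2
      ext z
      simp
    have conv : ∀ z : ℝ×ℝ, z.1 - z.2 ≠ 0 →
        Filter.Tendsto (fun j => F (fun k => w k / u j) z) Filter.atTop (nhds (G0 z)) := by
      intro z hz
      have prodId : G0 z = ∏ k, |z.1 - z.2| ^ (A * (β k : ℝ)) := by
        rw [hG0]
        dsimp only
        rw [← Real.rpow_sum_of_pos (abs_pos.mpr hz), ← Finset.mul_sum, hβsum]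
      rw [prodId]
      apply tendsto_finset_prod
      intro k _
      have h0 : Filter.Tendsto (fun j => w k / u j) Filter.atTop (nhds 0) :=
        Filter.Tendsto.const_div_atTop hu (w k)
      have h1 : Filter.Tendsto (fun j => z.1 - z.2 - w k / u j) Filter.atTop
          (nhds (z.1 - z.2)) := by
        have := tendsto_const_nhds (x := z.1 - z.2) (f := Filter.atTop (α := ℕ)) |>.sub h0
        simpa using this
      have h2 : ContinuousAt (fun y : ℝ => |y| ^ (A * (β k : ℝ))) (z.1 - z.2) :=
        (Real.continuousAt_rpow_const _ _ (Or.inl (abs_ne_zero.mpr hz))).comp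
          continuous_abs.continuousAt
      exact h2.tendsto.comp h1
    -- Fatou lower bound
    have hLow : L0 ≤ Filter.liminf (fun j => L (fun k => w k / u j)) Filter.atTop := by
      have heq : ∀ᵐ z ∂ν, ENNReal.ofReal (G0 z)
          = Filter.liminf (fun j => ENNReal.ofReal (F (fun k => w k / u j) z))
              Filter.atTop := by
        refine hae.mono fun z hz => ?_
        exact ((ENNReal.tendsto_ofReal (conv z hz)).liminf_eq).symm
      calc L0 = ∫⁻ z, Filter.liminf
            (fun j => ENNReal.ofReal (F (fun k => w k / u j) z)) Filter.atTop ∂ν :=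
          lintegral_congr_ae heq
        _ ≤ Filter.liminf (fun j => L (fun k => w k / u j)) Filter.atTop :=
          lintegral_liminf_le' fun j => ((Fmeas _).ennreal_ofReal).aemeasurable
    -- limsup upper bound
    have hUp : Filter.limsup (fun j => L (fun k => w k / u j)) Filter.atTop ≤ L0 := by
      set b : ℕ → ℝ := fun j => ∑ k, ((β k : ℝ)/m) * (K (t - w k / u j) - K (0 - w k / u j))
        with hb
      have hLb : ∀ j, L (fun k => w k / u j) ≤ ENNReal.ofReal (b j) := by
        intro j
        rw [LEq]
        exact ENNReal.ofReal_le_ofReal (intBound _)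
      have hbTendsto : Filter.Tendsto b Filter.atTop (nhds I0) := by
        have hterm : ∀ k : Fin n, Filter.Tendsto
            (fun j => ((β k : ℝ)/m) * (K (t - w k / u j) - K (0 - w k / u j)))
            Filter.atTop (nhds (((β k : ℝ)/m) * (K t - K 0))) := by
          intro k
          have h0 : Filter.Tendsto (fun j => w k / u j) Filter.atTop (nhds 0) :=
            Filter.Tendsto.const_div_atTop hu (w k)
          have h1 : Filter.Tendsto (fun j => K (t - w k / u j)) Filter.atTop (nhds (K t)) := by
            have := (Kcont.tendsto t).comp (by simpa using
              (tendsto_const_nhds (x := t) (f := Filter.atTop (α := ℕ))).sub h0)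
            exact this
          have h2 : Filter.Tendsto (fun j => K (0 - w k / u j)) Filter.atTop (nhds (K 0)) := by
            have := (Kcont.tendsto 0).comp (by simpa using
              (tendsto_const_nhds (x := (0:ℝ)) (f := Filter.atTop (α := ℕ))).sub h0)
            simpa [Function.comp_def] using this
          exact (h1.sub h2).const_mul _
        have hsum := tendsto_finset_sum Finset.univ (fun k _ => hterm k)
        have hval : ∑ k, ((β k : ℝ)/m) * (K t - K 0) = I0 := by
          rw [← Finset.sum_mul, ← Finset.sum_div, hβsum, div_self hm0, one_mul, I0val]
        rw [hb]
        simpa [hval] using hsum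
      have hofReal : Filter.Tendsto (fun j => ENNReal.ofReal (b j)) Filter.atTop
          (nhds (ENNReal.ofReal I0)) := ENNReal.tendsto_ofReal hbTendsto
      calc Filter.limsup (fun j => L (fun k => w k / u j)) Filter.atTop
          ≤ Filter.limsup (fun j => ENNReal.ofReal (b j)) Filter.atTop :=
            Filter.limsup_le_limsup (Filter.Eventually.of_forall hLb)
        _ = ENNReal.ofReal I0 := hofReal.limsup_eq
        _ = L0 := L0Eq.symm
    exact tendsto_of_le_liminf_of_limsup_le hLow hUp
  exact (ENNReal.tendsto_toReal L0ne).comp main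
end

section
/- Let H_0 ∈ (1/2,1), n ≥ 1, and nonnegative integers β_1,…,β_n with m = Σ_k β_k satisfying (2H_0-2)m > -1. Then sup over (w₁,…,wₙ) ∈ ℝⁿ of ∫_{[0,t]²} Π_{k=1}^n |s - s' - w_k|^{(2H_0-2)β_k} ds ds' is finite, for any fixed t > 0. -/
open MeasureTheory Set

lemma aux_abs_rpow_intInt {γ : ℝ} (h : -1 < γ) (a b : ℝ) :
    IntervalIntegrable (fun x : ℝ => |x| ^ γ) volume a b := by
  have key : ∀ c : ℝ, 0 ≤ c → IntervalIntegrable (fun x : ℝ => |x| ^ γ) volume 0 c := by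
    intro c hc
    rw [intervalIntegrable_iff, uIoc_of_le hc]
    have m := intervalIntegral.intervalIntegrable_rpow' (a := 0) (b := c) h
    rw [intervalIntegrable_iff, uIoc_of_le hc] at m
    exact m.congr_fun (fun x hx => by rw [abs_of_pos hx.1]) measurableSet_Ioc
  have key2 : ∀ c : ℝ, IntervalIntegrable (fun x : ℝ => |x| ^ γ) volume 0 c := by
    intro c
    rcases le_total 0 c with hc | hc
    · exact key c hc
    · rw [IntervalIntegrable.iff_comp_neg]
      simp only [abs_neg, neg_zero]
      exact key (-c) (by linarith)
  exact (key2 a).symm.trans (key2 b)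

lemma aux_intInt_shift {γ : ℝ} (h : -1 < γ) (c a b : ℝ) :
    IntervalIntegrable (fun x : ℝ => |c - x| ^ γ) volume a b := by
  have := (aux_abs_rpow_intInt h (c - a) (c - b)).comp_sub_left c
  simpa using this

lemma aux_intOn {γ : ℝ} (h : -1 < γ) (c a b : ℝ) :
    IntegrableOn (fun x : ℝ => |c - x| ^ γ) (Icc a b) volume := by
  rcases le_or_gt a b with hab | hab
  · exact (intervalIntegrable_iff_integrableOn_Icc_of_le hab).mp (aux_intInt_shift h c a b)
  · rw [Icc_eq_empty (not_le.mpr hab)]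
    exact integrableOn_empty

lemma aux_bound {γ t : ℝ} (hγ1 : -1 < γ) (hγ0 : γ ≤ 0) (ht : 0 < t) (c : ℝ) :
    (∫ x in Icc (0:ℝ) t, |c - x| ^ γ) ≤ (∫ u in (-t)..t, |u| ^ γ) + t * t ^ γ := by
  set f : ℝ → ℝ := fun x => |c - x| ^ γ with hf
  have hfnonneg : ∀ x, 0 ≤ f x := fun x => Real.rpow_nonneg (abs_nonneg _) _
  set T : Set ℝ := Icc (c - t) (c + t) with hT
  have hIS : IntegrableOn f (Icc 0 t) volume := aux_intOn hγ1 c 0 t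
  have hIT : IntegrableOn f T volume := aux_intOn hγ1 c (c - t) (c + t)
  have hsplit : (∫ x in Icc (0:ℝ) t ∩ T, f x) + (∫ x in Icc (0:ℝ) t \ T, f x)
      = ∫ x in Icc (0:ℝ) t, f x := integral_inter_add_diff measurableSet_Icc hIS
  have part1 : (∫ x in Icc (0:ℝ) t ∩ T, f x) ≤ ∫ x in T, f x := by
    apply setIntegral_mono_set hIT
    · exact Filter.Eventually.of_forall fun x => hfnonneg x
    · exact Filter.Eventually.of_forall fun x hx => hx.2
  have part1b : (∫ x in T, f x) = ∫ u in (-t)..t, |u| ^ γ := by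
    have h1 : c - t ≤ c + t := by linarith
    rw [hT, integral_Icc_eq_integral_Ioc, ← intervalIntegral.integral_of_le h1]
    have h2 := intervalIntegral.integral_comp_sub_left (a := c - t) (b := c + t)
      (fun u : ℝ => |u| ^ γ) c
    have h3 : c - (c + t) = -t := by ring
    have h4 : c - (c - t) = t := by ring
    rw [h3, h4] at h2
    exact h2
  have part2 : (∫ x in Icc (0:ℝ) t \ T, f x) ≤ t * t ^ γ := by
    have hmeas : MeasurableSet (Icc (0:ℝ) t \ T) :=
      measurableSet_Icc.diff measurableSet_Icc
    have hμ : volume (Icc (0:ℝ) t \ T) < ⊤ :=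
      lt_of_le_of_lt (measure_mono diff_subset) measure_Icc_lt_top
    have hconst : IntegrableOn (fun _ : ℝ => t ^ γ) (Icc (0:ℝ) t \ T) volume :=
      integrableOn_const hμ.ne
    have hptwise : ∀ x ∈ Icc (0:ℝ) t \ T, f x ≤ t ^ γ := by
      intro x hx
      have hxT : x ∉ T := hx.2
      have habs : t ≤ |c - x| := by
        rw [hT, mem_Icc, not_and_or] at hxT
        rcases hxT with h | h
        · push_neg at h
          have : t < c - x := by linarith
          calc t ≤ c - x := this.le
            _ ≤ |c - x| := le_abs_self _
        · push_neg at h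
          have : t < -(c - x) := by linarith
          calc t ≤ -(c - x) := this.le
            _ ≤ |c - x| := neg_le_abs _
      exact Real.rpow_le_rpow_of_nonpos ht habs hγ0
    calc (∫ x in Icc (0:ℝ) t \ T, f x) ≤ ∫ _ in Icc (0:ℝ) t \ T, t ^ γ :=
          setIntegral_mono_on (hIS.mono_set diff_subset) hconst hmeas hptwise
      _ = (volume (Icc (0:ℝ) t \ T)).toReal * t ^ γ := by
          rw [setIntegral_const, smul_eq_mul]; rfl
      _ ≤ t * t ^ γ := by
          apply mul_le_mul_of_nonneg_right _ (Real.rpow_nonneg ht.le _)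
          have h5 : volume (Icc (0:ℝ) t \ T) ≤ ENNReal.ofReal t := by
            refine le_trans (measure_mono diff_subset) ?_
            rw [Real.volume_Icc]
            simp
          calc (volume (Icc (0:ℝ) t \ T)).toReal ≤ (ENNReal.ofReal t).toReal :=
                ENNReal.toReal_mono ENNReal.ofReal_ne_top h5
            _ = t := ENNReal.toReal_ofReal ht.le
  linarith [hsplit, part1, part2, part1b]

theorem stmt_9 (n : ℕ) (hn : 1 ≤ n) (H0 t : ℝ) (h1 : 1/2 < H0) (h2 : H0 < 1) (ht : 0 < t)
    (β : Fin n → ℕ) (hint : (2*H0 - 2) * ((∑ k, β k : ℕ) : ℝ) > -1) :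
    ∃ C : ℝ, ∀ w : Fin n → ℝ,
      (∫ s in Set.Icc (0:ℝ) t, ∫ s' in Set.Icc (0:ℝ) t,
          ∏ k, |s - s' - w k| ^ ((2*H0 - 2) * (β k : ℝ))) ≤ C := by
  set α : ℝ := 2 * H0 - 2 with hα
  have hμIcc : volume (Icc (0:ℝ) t) = ENNReal.ofReal t := by
    rw [Real.volume_Icc]; norm_num
  have htoReal : (volume (Icc (0:ℝ) t)).toReal = t := by
    rw [hμIcc, ENNReal.toReal_ofReal ht.le]
  by_cases hm : (∑ k, β k) = 0
  · -- all β k = 0, integrand is 1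
    refine ⟨t * t, fun w => ?_⟩
    have hβ0 : ∀ k, β k = 0 := by
      intro k
      exact Finset.sum_eq_zero_iff.mp hm k (Finset.mem_univ k)
    have hprod : ∀ s s' : ℝ, (∏ k, |s - s' - w k| ^ (α * (β k : ℝ))) = 1 := by
      intro s s'
      apply Finset.prod_eq_one
      intro k _
      rw [hβ0 k]
      norm_num
    have : (∫ s in Set.Icc (0:ℝ) t, ∫ s' in Set.Icc (0:ℝ) t,
        ∏ k, |s - s' - w k| ^ (α * (β k : ℝ))) = t * t := by
      simp only [hprod]
      rw [setIntegral_const, setIntegral_const, measureReal_def, htoReal]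
      simp
    rw [this]
  · -- m ≥ 1
    have hmpos : (0:ℝ) < ((∑ k, β k : ℕ) : ℝ) := by
      have : 0 < ∑ k, β k := Nat.pos_of_ne_zero hm
      exact_mod_cast this
    set m : ℝ := ((∑ k, β k : ℕ) : ℝ) with hmdef
    set γ : ℝ := α * m with hγdef
    have hγ1 : -1 < γ := hint
    have hαneg : α < 0 := by rw [hα]; linarith
    have hγ0 : γ ≤ 0 := le_of_lt (mul_neg_of_neg_of_pos hαneg hmpos)
    set θ : Fin n → ℝ := fun k => (β k : ℝ) / m with hθdef
    have hθ0 : ∀ k, 0 ≤ θ k := fun k => div_nonneg (Nat.cast_nonneg _) hmpos.le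
    have hm0 : m ≠ 0 := ne_of_gt hmpos
    have hsum : ∑ k, ((β k : ℝ)) = m := by rw [hmdef]; push_cast; rfl
    have hθ1 : ∑ k, θ k = 1 := by
      simp only [hθdef]
      rw [← Finset.sum_div, hsum, div_self hm0]
    set M : ℝ := (∫ u in (-t)..t, |u| ^ γ) + t * t ^ γ with hM
    refine ⟨t * M, fun w => ?_⟩
    -- pointwise AM-GM
    have hpoint : ∀ x : Fin n → ℝ,
        (∏ k, |x k| ^ (α * (β k : ℝ))) ≤ ∑ k, θ k * |x k| ^ γ := by
      intro x
      have heq : (∏ k, |x k| ^ (α * (β k : ℝ))) = ∏ k, (|x k| ^ γ) ^ θ k := by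
        refine Finset.prod_congr rfl fun k _ => ?_
        rw [← Real.rpow_mul (abs_nonneg _)]
        congr 1
        rw [hγdef, hθdef]
        field_simp
      rw [heq]
      exact Real.geom_mean_le_arith_mean_weighted Finset.univ θ (fun k => |x k| ^ γ)
        (fun k _ => hθ0 k) hθ1 (fun k _ => Real.rpow_nonneg (abs_nonneg _) _)
    have habs_rw : ∀ (s : ℝ) (k : Fin n), (fun s' : ℝ => |s - s' - w k| ^ γ)
        = fun s' : ℝ => |(s - w k) - s'| ^ γ := by
      intro s k; funext s'; congr 2; ring
    have hinner : ∀ s : ℝ,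
        (∫ s' in Icc (0:ℝ) t, ∏ k, |s - s' - w k| ^ (α * (β k : ℝ))) ≤ M := by
      intro s
      have hint_k : ∀ k : Fin n,
          IntegrableOn (fun s' : ℝ => |s - s' - w k| ^ γ) (Icc 0 t) volume := by
        intro k; rw [habs_rw s k]; exact aux_intOn hγ1 (s - w k) 0 t
      have hg_int : Integrable (fun s' : ℝ => ∑ k, θ k * |s - s' - w k| ^ γ)
          (volume.restrict (Icc (0:ℝ) t)) := by
        apply integrable_finset_sum
        intro k _
        exact (hint_k k).const_mul (θ k)
      calc (∫ s' in Icc (0:ℝ) t, ∏ k, |s - s' - w k| ^ (α * (β k : ℝ)))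
          ≤ ∫ s' in Icc (0:ℝ) t, ∑ k, θ k * |s - s' - w k| ^ γ := by
            apply integral_mono_of_nonneg
            · exact Filter.Eventually.of_forall fun s' =>
                Finset.prod_nonneg fun k _ => Real.rpow_nonneg (abs_nonneg _) _
            · exact hg_int
            · exact Filter.Eventually.of_forall fun s' => hpoint (fun k => s - s' - w k)
        _ = ∑ k, θ k * ∫ s' in Icc (0:ℝ) t, |s - s' - w k| ^ γ := by
            rw [integral_finset_sum _ (fun k _ => (hint_k k).const_mul (θ k))]
            exact Finset.sum_congr rfl fun k _ => integral_const_mul _ _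
        _ ≤ ∑ k, θ k * M := by
            refine Finset.sum_le_sum fun k _ => mul_le_mul_of_nonneg_left ?_ (hθ0 k)
            rw [habs_rw s k]
            exact aux_bound hγ1 hγ0 ht (s - w k)
        _ = M := by rw [← Finset.sum_mul, hθ1, one_mul]
    calc (∫ s in Icc (0:ℝ) t, ∫ s' in Icc (0:ℝ) t,
          ∏ k, |s - s' - w k| ^ (α * (β k : ℝ)))
        ≤ ∫ _ in Icc (0:ℝ) t, M := by
          apply integral_mono_of_nonneg
          · exact Filter.Eventually.of_forall fun s => integral_nonneg fun s' =>
              Finset.prod_nonneg fun k _ => Real.rpow_nonneg (abs_nonneg _) _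
          · exact integrableOn_const measure_Icc_lt_top.ne
          · exact Filter.Eventually.of_forall hinner
      _ = t * M := by rw [setIntegral_const, measureReal_def, htoReal, smul_eq_mul]
end
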